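/- Let β > 1, m > 0 and s > 2 m^{−β}. Set u_* = (s/2)^{−1/β} (so 0 < u_* < m), s₀ = s − m^{−β}, and define h(u) = (s − u^{−β})^{−1/β} for u ∈ [u_*, m]. Let μ be the Borel probability measure on [u_*, m] whose density is proportional to √(1 + h′(u)²), and let ν be the uniform probability measure on [s₀^{−1/β}, m]. Then μ stochastically dominates ν: for every x ∈ ℝ, μ([x, ∞)) ≥ ν([x, ∞)). (This is the n = 2 case of Proposition 4.2: the conditional law of the larger of two i.i.d. Uniform(0,m) variables U₁, U₂ given U₁^{−β} + U₂^{−β} = s — which is exactly μ, the projection of normalized arclength measure on the constraint curve — is stochastically larger than a Uniform(s₀^{−1/β}, m) variable.) -/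

import Mathlib

open MeasureTheory

noncomputable section
set_option maxHeartbeats 1000000

/-- The n = 2 case of Proposition 4.2 (stochastic comparison): the projection μ of normalized
arclength measure on the constraint curve stochastically dominates the uniform measure ν on
[s₀^{−1/β}, m]: μ([x,∞)) ≥ ν([x,∞)) for all x. Here μ has density on [u_*, m] proportional to
√(1 + h′(u)²) with h(u) = (s − u^{−β})^{−1/β}, u_* = (s/2)^{−1/β}, s₀ = s − m^{−β}. -/
theorem stochastic_domination_two_points
    (β m s : ℝ) (hβ : 1 < β) (hm : 0 < m) (hs : 2 * m ^ (-β) < s) :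
    ∀ x : ℝ,
      (∫ u in Set.Icc ((s / 2) ^ (-1 / β)) m ∩ Set.Ici x,
          Real.sqrt (1 + (deriv (fun v : ℝ => (s - v ^ (-β)) ^ (-1 / β)) u) ^ 2)) /
        (∫ u in Set.Icc ((s / 2) ^ (-1 / β)) m,
          Real.sqrt (1 + (deriv (fun v : ℝ => (s - v ^ (-β)) ^ (-1 / β)) u) ^ 2)) ≥
      (volume (Set.Icc ((s - m ^ (-β)) ^ (-1 / β)) m ∩ Set.Ici x)).toReal /
        (m - (s - m ^ (-β)) ^ (-1 / β)) := by
  intro x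
  have hβ0 : (0:ℝ) < β := by linarith
  have hβne : β ≠ 0 := hβ0.ne'
  have hmβ : 0 < m ^ (-β) := Real.rpow_pos_of_pos hm _
  have hs0 : (0:ℝ) < s := by linarith
  have hs2 : (0:ℝ) < s / 2 := by linarith
  have hpneg : -1 / β < 0 := div_neg_of_neg_of_pos (by norm_num) hβ0
  set h : ℝ → ℝ := fun v : ℝ => (s - v ^ (-β)) ^ (-1 / β) with hh
  set ustar : ℝ := (s / 2) ^ (-1 / β) with hustar
  set a : ℝ := (s - m ^ (-β)) ^ (-1 / β) with ha
  set φ : ℝ → ℝ := fun u => -(u ^ (-β - 1) * (s - u ^ (-β)) ^ (-1 / β - 1)) with hφ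
  set g : ℝ → ℝ := fun u => Real.sqrt (1 + (deriv h u) ^ 2) with hg
  set ψ : ℝ → ℝ := fun u => Real.sqrt (1 + (φ u) ^ 2) with hψ
  -- basic facts
  have hu0 : 0 < ustar := Real.rpow_pos_of_pos hs2 _
  have ha0 : 0 < a := Real.rpow_pos_of_pos (by linarith) _
  have hmid : (m ^ (-β)) ^ (-1 / β) = m := by
    rw [← Real.rpow_mul hm.le, show (-β) * (-1/β) = (1:ℝ) by field_simp, Real.rpow_one]
  have hum : ustar < m := by
    rw [← hmid]
    exact Real.rpow_lt_rpow_of_neg hmβ (by linarith) hpneg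
  have hau : a < ustar := Real.rpow_lt_rpow_of_neg hs2 (by linarith) hpneg
  have ham : a < m := hau.trans hum
  have hustar_rpow : ustar ^ (-β) = s / 2 := by
    rw [hustar, ← Real.rpow_mul hs2.le, show (-1/β) * (-β) = (1:ℝ) by field_simp, Real.rpow_one]
  have hhstar : h ustar = ustar := by
    rw [hh]; simp only []
    rw [hustar_rpow, show s - s/2 = s/2 by ring]
  -- positivity on the interval
  have hIpos : ∀ u ∈ Set.Icc ustar m, 0 < u ∧ 0 < s - u ^ (-β) := by
    intro u hu
    have hu' : 0 < u := lt_of_lt_of_le hu0 hu.1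
    have h2 : u ^ (-β) ≤ ustar ^ (-β) :=
      Real.rpow_le_rpow_of_nonpos hu0 hu.1 (neg_nonpos.mpr hβ0.le)
    rw [hustar_rpow] at h2
    exact ⟨hu', by linarith⟩
  -- derivative
  have hD : ∀ u : ℝ, 0 < u → 0 < s - u ^ (-β) → HasDerivAt h (φ u) u := by
    intro u hu hsu
    have h1 : HasDerivAt (fun v : ℝ => s - v ^ (-β)) (β * u ^ (-β - 1)) u := by
      have := (Real.hasDerivAt_rpow_const (x := u) (p := -β) (Or.inl hu.ne')).const_sub s
      rw [show β * u ^ (-β - 1) = -(-β * u ^ (-β - 1)) by ring]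
      exact this
    have h2 := h1.rpow_const (p := -1/β) (Or.inl hsu.ne')
    rw [hh]
    convert h2 using 1
    rw [hφ]
    field_simp
  have hderiv_eq : ∀ u ∈ Set.Icc ustar m, deriv h u = φ u := fun u hu =>
    (hD u (hIpos u hu).1 (hIpos u hu).2).deriv
  have hφneg : ∀ u ∈ Set.Icc ustar m, φ u ≤ 0 := by
    intro u hu
    rw [hφ]
    have := hIpos u hu
    have p1 : 0 < u ^ (-β - 1) := Real.rpow_pos_of_pos this.1 _
    have p2 : 0 < (s - u ^ (-β)) ^ (-1/β - 1) := Real.rpow_pos_of_pos this.2 _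
    simp only []
    nlinarith
  -- continuity of φ and ψ on the interval
  have hφc : ContinuousOn φ (Set.Icc ustar m) := by
    intro u hu
    have hu' : 0 < u := (hIpos u hu).1
    have c1 : ContinuousAt (fun v : ℝ => v ^ (-β - 1)) u :=
      Real.continuousAt_rpow_const u _ (Or.inl hu'.ne')
    have c2 : ContinuousAt (fun v : ℝ => s - v ^ (-β)) u :=
      continuousAt_const.sub (Real.continuousAt_rpow_const u _ (Or.inl hu'.ne'))
    have c3 : ContinuousAt (fun v : ℝ => (s - v ^ (-β)) ^ (-1/β - 1)) u :=
      c2.rpow_const (Or.inl (hIpos u hu).2.ne')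
    exact ((c1.mul c3).neg).continuousWithinAt
  have hψc : ContinuousOn ψ (Set.Icc ustar m) :=
    (continuousOn_const.add (hφc.pow 2)).sqrt
  -- integrability of g
  have hgψ : Set.EqOn ψ g (Set.Icc ustar m) := by
    intro u hu
    rw [hψ, hg]
    simp only []
    rw [hderiv_eq u hu]
  have hψInt : IntegrableOn ψ (Set.Icc ustar m) volume := hψc.integrableOn_Icc
  have hgInt : IntegrableOn g (Set.Icc ustar m) volume :=
    hψInt.congr_fun hgψ measurableSet_Icc
  have hg0 : ∀ u : ℝ, 0 ≤ g u := fun u => Real.sqrt_nonneg _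
  have hg1 : ∀ u : ℝ, 1 ≤ g u := by
    intro u
    rw [hg]
    simp only []
    rw [Real.one_le_sqrt]
    nlinarith [sq_nonneg (deriv h u)]
  -- lower bound for integrals of g over Icc c m, ustar ≤ c ≤ m
  have hlow : ∀ c : ℝ, ustar ≤ c → c ≤ m → m - c ≤ ∫ u in Set.Icc c m, g u := by
    intro c hc1 hc2
    have hsub : Set.Icc c m ⊆ Set.Icc ustar m := Set.Icc_subset_Icc_left hc1
    have hint : IntegrableOn g (Set.Icc c m) volume := hgInt.mono_set hsub
    have hconst : IntegrableOn (fun _ : ℝ => (1:ℝ)) (Set.Icc c m) volume :=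
      integrableOn_const (by rw [Real.volume_Icc]; exact ENNReal.ofReal_ne_top)
    have := setIntegral_mono_on hconst hint measurableSet_Icc (fun u _ => hg1 u)
    rw [setIntegral_const] at this
    rw [Measure.real, Real.volume_Icc] at this
    rw [ENNReal.toReal_ofReal (by linarith)] at this
    simpa using this
  set D : ℝ := ∫ u in Set.Icc ustar m, g u with hDdef
  have hDlb : m - ustar ≤ D := hlow ustar le_rfl hum.le
  have hDpos : 0 < D := lt_of_lt_of_le (by linarith) hDlb
  rcases lt_or_ge x ustar with hx | hx
  · -- x < ustar : LHS = 1, RHS ≤ 1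
    have hEq : Set.Icc ustar m ∩ Set.Ici x = Set.Icc ustar m :=
      Set.inter_eq_self_of_subset_left (fun u hu => hx.le.trans hu.1)
    rw [hEq]
    rw [div_self hDpos.ne']
    rw [ge_iff_le, div_le_one (by linarith)]
    have h1 : volume (Set.Icc a m ∩ Set.Ici x) ≤ volume (Set.Icc a m) :=
      measure_mono Set.inter_subset_left
    have h2 : volume (Set.Icc a m) = ENNReal.ofReal (m - a) := Real.volume_Icc
    calc (volume (Set.Icc a m ∩ Set.Ici x)).toReal
        ≤ (volume (Set.Icc a m)).toReal := by
          apply ENNReal.toReal_mono _ h1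
          rw [h2]; exact ENNReal.ofReal_ne_top
      _ = m - a := by rw [h2, ENNReal.toReal_ofReal (by linarith)]
  · rcases le_or_gt x m with hxm | hxm
    · -- main case : ustar ≤ x ≤ m
      have hIx : Set.Icc ustar m ∩ Set.Ici x = Set.Icc x m := by
        ext u
        simp only [Set.mem_inter_iff, Set.mem_Icc, Set.mem_Ici]
        constructor
        · rintro ⟨⟨_, h2⟩, h3⟩; exact ⟨h3, h2⟩
        · rintro ⟨h1, h2⟩; exact ⟨⟨hx.trans h1, h2⟩, h1⟩
      have hax : Set.Icc a m ∩ Set.Ici x = Set.Icc x m := by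
        ext u
        simp only [Set.mem_inter_iff, Set.mem_Icc, Set.mem_Ici]
        constructor
        · rintro ⟨⟨_, h2⟩, h3⟩; exact ⟨h3, h2⟩
        · rintro ⟨h1, h2⟩; exact ⟨⟨(hau.le.trans hx).trans h1, h2⟩, h1⟩
      rw [hIx, hax, Real.volume_Icc, ENNReal.toReal_ofReal (by linarith)]
      set N : ℝ := ∫ u in Set.Icc x m, g u with hNdef
      set B : ℝ := ∫ u in Set.Icc ustar x, g u with hBdef
      have hNlb : m - x ≤ N := hlow x hx hxm
      have hB0 : 0 ≤ B := setIntegral_nonneg measurableSet_Icc fun u _ => hg0 u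
      -- FTC : ∫ ustar..x (1 - φ) = x - h x
      have hsubx : Set.Icc ustar x ⊆ Set.Icc ustar m := Set.Icc_subset_Icc_right hxm
      have hFTC : ∫ u in ustar..x, (1 - φ u) = x - h x := by
        have hF : ∀ u ∈ Set.uIcc ustar x, HasDerivAt (fun v => v - h v) (1 - φ u) u := by
          intro u hu
          rw [Set.uIcc_of_le hx] at hu
          have := hIpos u (hsubx hu)
          exact (hasDerivAt_id u).sub (hD u this.1 this.2)
        have hci : ContinuousOn (fun u => 1 - φ u) (Set.uIcc ustar x) := by
          rw [Set.uIcc_of_le hx]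
          exact continuousOn_const.sub (hφc.mono hsubx)
        rw [intervalIntegral.integral_eq_sub_of_hasDerivAt hF hci.intervalIntegrable]
        rw [hhstar]
        ring
      -- bound B
      have hB1 : B ≤ ∫ u in Set.Icc ustar x, (1 - φ u) := by
        apply setIntegral_mono_on (hgInt.mono_set hsubx)
          ((continuousOn_const.sub (hφc.mono hsubx)).integrableOn_Icc) measurableSet_Icc
        intro u hu
        have hu' := hsubx hu
        rw [hg]
        simp only []
        rw [hderiv_eq u hu']
        have hφn := hφneg u hu'
        have : (1 - φ u) = Real.sqrt ((1 - φ u)^2) := (Real.sqrt_sq (by linarith)).symm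
        show Real.sqrt (1 + φ u ^ 2) ≤ 1 - φ u
        rw [this]
        exact Real.sqrt_le_sqrt (by nlinarith)
      have hB2 : (∫ u in Set.Icc ustar x, (1 - φ u)) = x - h x := by
        rw [integral_Icc_eq_integral_Ioc, ← intervalIntegral.integral_of_le hx, hFTC]
      have hha : a ≤ h x := by
        have hx0 : 0 < x := lt_of_lt_of_le hu0 hx
        have hxb : m ^ (-β) ≤ x ^ (-β) :=
          Real.rpow_le_rpow_of_nonpos hx0 hxm (neg_nonpos.mpr hβ0.le)
        have hposx : 0 < s - x ^ (-β) := (hIpos x ⟨hx, hxm⟩).2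
        rw [ha, hh]
        simp only []
        exact Real.rpow_le_rpow_of_nonpos hposx (by linarith) hpneg.le
      have hBub : B ≤ x - a := by
        rw [hB2] at hB1
        linarith
      -- split D
      have hii : ∀ c d : ℝ, ustar ≤ c → c ≤ d → d ≤ m → IntervalIntegrable g volume c d := by
        intro c d h1 h2 h3
        rw [intervalIntegrable_iff, Set.uIoc_of_le h2]
        exact hgInt.mono_set (fun u hu => ⟨h1.trans hu.1.le, hu.2.trans h3⟩)
      have hsplit : D = B + N := by
        rw [hDdef, hBdef, hNdef]
        rw [integral_Icc_eq_integral_Ioc, integral_Icc_eq_integral_Ioc,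
          integral_Icc_eq_integral_Ioc,
          ← intervalIntegral.integral_of_le hum.le, ← intervalIntegral.integral_of_le hx,
          ← intervalIntegral.integral_of_le hxm,
          ← intervalIntegral.integral_add_adjacent_intervals (hii ustar x le_rfl hx hxm)
            (hii x m hx hxm le_rfl)]
      rw [ge_iff_le, div_le_div_iff₀ (by linarith : (0:ℝ) < m - a) hDpos, hsplit]
      have hxa : a ≤ x := (hau.le.trans hx)
      nlinarith [mul_nonneg (sub_nonneg.mpr hNlb) (sub_nonneg.mpr hxa),
        mul_nonneg (show (0:ℝ) ≤ m - x by linarith) (sub_nonneg.mpr hBub)]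
    · -- x > m : RHS = 0
      have hEq : Set.Icc a m ∩ Set.Ici x = ∅ := by
        ext u
        simp only [Set.mem_inter_iff, Set.mem_Icc, Set.mem_Ici, Set.mem_empty_iff_false,
          iff_false, not_and]
        rintro ⟨_, h2⟩ h3
        linarith
      rw [hEq]
      simp only [measure_empty, ENNReal.toReal_zero, zero_div, ge_iff_le]
      apply div_nonneg _ hDpos.le
      exact setIntegral_nonneg (measurableSet_Icc.inter measurableSet_Ici) fun u _ => hg0 u
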